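/- Let N be a positive integer and let φ_0,…,φ_{N+1} : ℂ → ℂ be polynomial functions, with φ*_{N+1} the reciprocal polynomial of φ_{N+1} of degree bound N+1 (the coefficient of z^j in φ*_{N+1} is the complex conjugate of the coefficient of z^{N+1−j} in φ_{N+1}), such that the Christoffel–Darboux formula on the unit circle holds: for all z, w ∈ ℂ with conj(w)·z ≠ 1, Σ_{j=0}^N φ_j(z)·conj(φ_j(w)) = (conj(φ*_{N+1}(w))·φ*_{N+1}(z) − conj(φ_{N+1}(w))·φ_{N+1}(z))/(1 − conj(w)·z). Let z ∈ ℂ with |z| ≠ 1 and Σ_{j=0}^N |φ_j(z)|² > 0, and write A = |φ*_{N+1}(z)|² − |φ_{N+1}(z)|². Then for K = (K₁,K₂) ∈ ℝ², the density function built from f_j = φ_j satisfies h_{N,K}(z) = (1/π)·exp(−((K₁²+K₂²)/2)·(1 − |z|²)/A) · [ 1/(1 − |z|²)² − |φ*_{N+1}(z)·φ_{N+1}′(z) − φ*_{N+1}′(z)·φ_{N+1}(z)|²/A² + ((K₁²+K₂²)/2)·( (1 − |z|²)·|conj(φ*_{N+1}′(z))·φ*_{N+1}(z) − conj(φ_{N+1}′(z))·φ_{N+1}(z)|²/A³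 + 2·Re(z·(φ*_{N+1}′(z)·conj(φ*_{N+1}(z)) − φ_{N+1}′(z)·conj(φ_{N+1}(z))))/A² + |z|²/((1 − |z|²)·A) ) ]. -/

import Mathlib

open Finset

/-- The kernel `B₀,N(z) = ∑ |f_j(z)|²`. -/
noncomputable def B0 (f : ℕ → ℂ → ℂ) (N : ℕ) (z : ℂ) : ℝ :=
  ∑ j ∈ Finset.range (N + 1), ‖f j z‖ ^ 2

/-- The kernel `B₁,N(z) = ∑ conj(f_j(z))·f_j′(z)`. -/
noncomputable def B1 (f : ℕ → ℂ → ℂ) (N : ℕ) (z : ℂ) : ℂ :=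
  ∑ j ∈ Finset.range (N + 1), (starRingEnd ℂ) (f j z) * deriv (f j) z

/-- The kernel `B₂,N(z) = ∑ |f_j′(z)|²`. -/
noncomputable def B2 (f : ℕ → ℂ → ℂ) (N : ℕ) (z : ℂ) : ℝ :=
  ∑ j ∈ Finset.range (N + 1), ‖deriv (f j) z‖ ^ 2

/-- The density `h_{N,K}(z)` of complex zeros of `∑ η_j f_j(z) = K₁ + i K₂`. -/
noncomputable def hDen (f : ℕ → ℂ → ℂ) (N : ℕ) (K₁ K₂ : ℝ) (z : ℂ) : ℝ :=
  Real.exp (-(K₁ ^ 2 + K₂ ^ 2) / (2 * B0 f N z)) / (Real.pi * B0 f N z) *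
    (B2 f N z - ‖B1 f N z‖ ^ 2 / B0 f N z *
      (1 - (K₁ ^ 2 + K₂ ^ 2) / (2 * B0 f N z)))


lemma conj_eval (p : Polynomial ℂ) (w : ℂ) :
    (starRingEnd ℂ) (p.eval w) = (p.map (starRingEnd ℂ)).eval ((starRingEnd ℂ) w) := by
  simp [Polynomial.eval_map, Polynomial.eval₂_eq_sum_range, Polynomial.eval_eq_sum_range,
    map_sum, map_mul, map_pow]

set_option maxHeartbeats 2000000 in
/-- Theorem: density of complex zeros of random sums of polynomials
orthonormal on the unit circle, at an arbitrary level `K = (K₁, K₂)`,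
where `A = |φ*_{N+1}(z)|² − |φ_{N+1}(z)|²`. -/
theorem density_orthogonal_unit_circle (N : ℕ) (hN : 0 < N)
    (φ : ℕ → ℂ → ℂ) (φs : ℂ → ℂ) (Q : Polynomial ℂ)
    (hpoly : ∀ j ≤ N + 1, ∃ q : Polynomial ℂ, ∀ z : ℂ, φ j z = Polynomial.eval z q)
    (hQ : ∀ z : ℂ, φ (N + 1) z = Polynomial.eval z Q)
    (hφs : ∀ z : ℂ, φs z =
      Polynomial.eval z (Polynomial.reflect (N + 1) (Q.map (starRingEnd ℂ))))
    (hCD : ∀ z w : ℂ, (starRingEnd ℂ) w * z ≠ 1 →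
      ∑ j ∈ Finset.range (N + 1), φ j z * (starRingEnd ℂ) (φ j w) =
        ((starRingEnd ℂ) (φs w) * φs z -
          (starRingEnd ℂ) (φ (N + 1) w) * φ (N + 1) z) /
          (1 - (starRingEnd ℂ) w * z))
    (z : ℂ) (hz : ‖z‖ ≠ 1)
    (hB0 : 0 < B0 φ N z)
    (A : ℝ) (hA : A = ‖φs z‖ ^ 2 - ‖φ (N + 1) z‖ ^ 2)
    (K₁ K₂ : ℝ) :
    hDen φ N K₁ K₂ z =
      1 / Real.pi *
        Real.exp (-((K₁ ^ 2 + K₂ ^ 2) / 2) * (1 - ‖z‖ ^ 2) / A) *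
        (1 / (1 - ‖z‖ ^ 2) ^ 2 -
          ‖φs z * deriv (φ (N + 1)) z - deriv φs z * φ (N + 1) z‖ ^ 2 /
            A ^ 2 +
          (K₁ ^ 2 + K₂ ^ 2) / 2 *
            ((1 - ‖z‖ ^ 2) *
                ‖(starRingEnd ℂ) (deriv φs z) * φs z -
                  (starRingEnd ℂ) (deriv (φ (N + 1)) z) * φ (N + 1) z‖ ^ 2 /
                A ^ 3 +
              2 * (z * (deriv φs z * (starRingEnd ℂ) (φs z) -
                    deriv (φ (N + 1)) z * (starRingEnd ℂ) (φ (N + 1) z))).re /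
                A ^ 2 +
              ‖z‖ ^ 2 / ((1 - ‖z‖ ^ 2) * A))) := by
  -- polynomials for each φ j
  obtain ⟨p, hp⟩ : ∃ p : ℕ → Polynomial ℂ, ∀ j ≤ N + 1, φ j = fun x => (p j).eval x := by
    refine ⟨fun j => if h : j ≤ N + 1 then (hpoly j h).choose else 0, fun j h => ?_⟩
    funext x; simp only [dif_pos h]; exact (hpoly j h).choose_spec x
  set Ps : Polynomial ℂ := Polynomial.reflect (N + 1) (Q.map (starRingEnd ℂ)) with hPs
  have hφsf : φs = fun x => Ps.eval x := funext fun x => hφs x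
  have hφNf : φ (N + 1) = fun x => Q.eval x := funext fun x => hQ x
  -- derivative facts
  have hdj : ∀ j ≤ N + 1, ∀ x : ℂ, HasDerivAt (φ j) ((p j).derivative.eval x) x := by
    intro j hj x; rw [hp j hj]; exact (p j).hasDerivAt x
  have hds : ∀ x : ℂ, HasDerivAt φs (Ps.derivative.eval x) x := by
    intro x; rw [hφsf]; exact Ps.hasDerivAt x
  have hdQ : ∀ x : ℂ, HasDerivAt (φ (N + 1)) (Q.derivative.eval x) x := by
    intro x; rw [hφNf]; exact Q.hasDerivAt x
  -- basic nonvanishing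
  have habs2 : ‖z‖ ^ 2 ≠ 1 := by
    intro h
    exact hz (by nlinarith [norm_nonneg z])
  have hzz : (starRingEnd ℂ) z * z ≠ 1 := by
    rw [Complex.normSq_eq_conj_mul_self.symm]
    intro h
    apply habs2
    rw [Complex.sq_norm]
    exact_mod_cast h
  -- general derivative of the CD identity in the first variable
  have hder : ∀ w : ℂ, (starRingEnd ℂ) w * z ≠ 1 →
      ∑ j ∈ Finset.range (N + 1), deriv (φ j) z * (starRingEnd ℂ) (φ j w) =
        (((starRingEnd ℂ) (φs w) * deriv φs z -
            (starRingEnd ℂ) (φ (N + 1) w) * deriv (φ (N + 1)) z) *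
            (1 - (starRingEnd ℂ) w * z) -
          ((starRingEnd ℂ) (φs w) * φs z -
            (starRingEnd ℂ) (φ (N + 1) w) * φ (N + 1) z) * (-(starRingEnd ℂ) w)) /
          (1 - (starRingEnd ℂ) w * z) ^ 2 := by
    intro w hw
    have hg : HasDerivAt (fun ζ => ∑ j ∈ Finset.range (N + 1), φ j ζ * (starRingEnd ℂ) (φ j w))
        (∑ j ∈ Finset.range (N + 1), deriv (φ j) z * (starRingEnd ℂ) (φ j w)) z := by
      refine HasDerivAt.fun_sum fun j hj => ?_
      have hj' : j ≤ N + 1 := le_of_lt (Finset.mem_range.mp hj)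
      have h := (hdj j hj' z).mul_const ((starRingEnd ℂ) (φ j w))
      rwa [(hdj j hj' z).deriv]
    have hden : HasDerivAt (fun ζ => 1 - (starRingEnd ℂ) w * ζ) (-(starRingEnd ℂ) w) z := by
      simpa using ((hasDerivAt_id z).const_mul ((starRingEnd ℂ) w)).const_sub 1
    have hnum : HasDerivAt (fun ζ => (starRingEnd ℂ) (φs w) * φs ζ -
        (starRingEnd ℂ) (φ (N + 1) w) * φ (N + 1) ζ)
        ((starRingEnd ℂ) (φs w) * deriv φs z -
          (starRingEnd ℂ) (φ (N + 1) w) * deriv (φ (N + 1)) z) z := by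
      have h1 := ((hds z).const_mul ((starRingEnd ℂ) (φs w)))
      have h2 := ((hdQ z).const_mul ((starRingEnd ℂ) (φ (N + 1) w)))
      rw [(hds z).deriv, (hdQ z).deriv]
      exact h1.sub h2
    have hd0 : (1 : ℂ) - (starRingEnd ℂ) w * z ≠ 0 := sub_ne_zero.mpr (Ne.symm hw)
    have hR := hnum.fun_div hden hd0
    have heq : (fun ζ => ∑ j ∈ Finset.range (N + 1), φ j ζ * (starRingEnd ℂ) (φ j w)) =ᶠ[nhds z]
        (fun ζ => ((starRingEnd ℂ) (φs w) * φs ζ -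
          (starRingEnd ℂ) (φ (N + 1) w) * φ (N + 1) ζ) / (1 - (starRingEnd ℂ) w * ζ)) := by
      have hev : ∀ᶠ ζ in nhds z, (starRingEnd ℂ) w * ζ ≠ 1 :=
        ((continuous_const.mul continuous_id).continuousAt).eventually_ne hw
      filter_upwards [hev] with ζ hζ
      exact hCD ζ w hζ
    calc ∑ j ∈ Finset.range (N + 1), deriv (φ j) z * (starRingEnd ℂ) (φ j w)
        = deriv (fun ζ => ∑ j ∈ Finset.range (N + 1), φ j ζ * (starRingEnd ℂ) (φ j w)) z :=
          hg.deriv.symm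
      _ = _ := by rw [heq.deriv_eq, hR.deriv]
  have h1 : ∀ w : ℂ, (starRingEnd ℂ) w * w = ((‖w‖ ^ 2 : ℝ) : ℂ) := fun w => by
    rw [Complex.sq_norm]; exact Complex.normSq_eq_conj_mul_self.symm
  have hAc : (starRingEnd ℂ) (φs z) * φs z -
      (starRingEnd ℂ) (φ (N + 1) z) * φ (N + 1) z = (A : ℂ) := by
    rw [hA, Complex.ofReal_sub, h1, h1]
  have hdc : (1 : ℂ) - (starRingEnd ℂ) z * z = ((1 - ‖z‖ ^ 2 : ℝ) : ℂ) := by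
    rw [h1]; push_cast; ring
  set c1 : ℂ := (starRingEnd ℂ) (φs z) * deriv φs z -
      (starRingEnd ℂ) (φ (N + 1) z) * deriv (φ (N + 1)) z with hc1
  set c3 : ℂ := φs z * deriv (φ (N + 1)) z - deriv φs z * φ (N + 1) z with hc3
  set d : ℝ := 1 - ‖z‖ ^ 2 with hd
  have hd0 : d ≠ 0 := sub_ne_zero.mpr (Ne.symm habs2)
  -- closed form for B0
  have hB0r : B0 φ N z = A / d := by
    have hc := hCD z z hzz
    rw [hAc, hdc] at hc
    have h1' : ∀ w : ℂ, (starRingEnd ℂ) w * w = (‖w‖ : ℂ) ^ 2 := fun w => by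
      rw [← Complex.ofReal_pow]; exact h1 w
    refine Complex.ofReal_inj.mp ?_
    rw [B0]
    push_cast
    rw [← hc]
    exact Finset.sum_congr rfl fun j _ => by rw [← h1', mul_comm]
  -- closed form for B1
  have hB1c : B1 φ N z = (c1 * (d : ℂ) + (starRingEnd ℂ) z * (A : ℂ)) / (d : ℂ) ^ 2 := by
    have h := hder z hzz
    rw [hAc, hdc] at h
    have hB1e : B1 φ N z = ∑ j ∈ Finset.range (N + 1), deriv (φ j) z * (starRingEnd ℂ) (φ j z) :=
      Finset.sum_congr rfl fun j _ => mul_comm _ _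
    rw [hB1e, h, hc1]; ring
  -- B2 via differentiation of the conjugated identity
  set Psc : Polynomial ℂ := Ps.map (starRingEnd ℂ) with hPsc
  set Qc : Polynomial ℂ := Q.map (starRingEnd ℂ) with hQc
  set w0 : ℂ := (starRingEnd ℂ) z with hw0
  have hw0z : w0 * z ≠ 1 := hzz
  have hd0c : (1 : ℂ) - w0 * z ≠ 0 := sub_ne_zero.mpr (Ne.symm hzz)
  have hevs : Psc.eval w0 = (starRingEnd ℂ) (φs z) := by
    rw [hφs z]; exact (conj_eval Ps z).symm
  have hevQ : Qc.eval w0 = (starRingEnd ℂ) (φ (N + 1) z) := by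
    rw [hQ z]; exact (conj_eval Q z).symm
  have hevds : Psc.derivative.eval w0 = (starRingEnd ℂ) (deriv φs z) := by
    rw [(hds z).deriv, hPsc, Polynomial.derivative_map]
    exact (conj_eval Ps.derivative z).symm
  have hevdQ : Qc.derivative.eval w0 = (starRingEnd ℂ) (deriv (φ (N + 1)) z) := by
    rw [(hdQ z).deriv, hQc, Polynomial.derivative_map]
    exact (conj_eval Q.derivative z).symm
  have hH : HasDerivAt
      (fun ω => ∑ j ∈ Finset.range (N + 1), deriv (φ j) z * ((p j).map (starRingEnd ℂ)).eval ω)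
      (∑ j ∈ Finset.range (N + 1),
        deriv (φ j) z * ((p j).map (starRingEnd ℂ)).derivative.eval w0) w0 :=
    HasDerivAt.fun_sum fun j _ => ((((p j).map (starRingEnd ℂ)).hasDerivAt w0).const_mul _)
  have hHval : (∑ j ∈ Finset.range (N + 1),
      deriv (φ j) z * ((p j).map (starRingEnd ℂ)).derivative.eval w0) = (B2 φ N z : ℂ) := by
    rw [B2]
    push_cast
    refine Finset.sum_congr rfl fun j hj => ?_
    have hj' : j ≤ N + 1 := le_of_lt (Finset.mem_range.mp hj)
    rw [Polynomial.derivative_map, hw0, ← conj_eval, ← (hdj j hj' z).deriv, mul_comm,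
      ← Complex.ofReal_pow, Complex.sq_norm, Complex.normSq_eq_conj_mul_self]
  have ha : HasDerivAt
      (fun ω => Psc.eval ω * deriv φs z - Qc.eval ω * deriv (φ (N + 1)) z)
      (Psc.derivative.eval w0 * deriv φs z - Qc.derivative.eval w0 * deriv (φ (N + 1)) z) w0 :=
    ((Psc.hasDerivAt w0).mul_const _).sub ((Qc.hasDerivAt w0).mul_const _)
  have hb : HasDerivAt
      (fun ω => Psc.eval ω * φs z - Qc.eval ω * φ (N + 1) z)
      (Psc.derivative.eval w0 * φs z - Qc.derivative.eval w0 * φ (N + 1) z) w0 :=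
    ((Psc.hasDerivAt w0).mul_const _).sub ((Qc.hasDerivAt w0).mul_const _)
  have hl : HasDerivAt (fun ω : ℂ => 1 - ω * z) (-z) w0 := by
    simpa using ((hasDerivAt_id w0).mul_const z).const_sub 1
  have hm : HasDerivAt (fun ω : ℂ => -ω) (-1 : ℂ) w0 := (hasDerivAt_id w0).neg
  have hnum := (ha.fun_mul hl).fun_sub (hb.fun_mul hm)
  have hden2 : HasDerivAt (fun ω : ℂ => (1 - ω * z) ^ 2)
      ((2 : ℕ) * (1 - w0 * z) ^ (2 - 1) * (-z)) w0 := hl.pow 2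
  have hR2 := hnum.fun_div hden2 (pow_ne_zero 2 hd0c)
  have heq2 : (fun ω => ∑ j ∈ Finset.range (N + 1),
        deriv (φ j) z * ((p j).map (starRingEnd ℂ)).eval ω) =ᶠ[nhds w0]
      (fun ω => ((Psc.eval ω * deriv φs z - Qc.eval ω * deriv (φ (N + 1)) z) * (1 - ω * z) -
        (Psc.eval ω * φs z - Qc.eval ω * φ (N + 1) z) * (-ω)) / (1 - ω * z) ^ 2) := by
    have hev : ∀ᶠ ω in nhds w0, ω * z ≠ 1 :=
      ((continuous_id.mul continuous_const).continuousAt).eventually_ne hw0z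
    filter_upwards [hev] with ω hω
    have hww : (starRingEnd ℂ) ((starRingEnd ℂ) ω) * z ≠ 1 := by rwa [Complex.conj_conj]
    have h := hder ((starRingEnd ℂ) ω) hww
    have hxs : (starRingEnd ℂ) (φs ((starRingEnd ℂ) ω)) = Psc.eval ω := by
      rw [hφs ((starRingEnd ℂ) ω), conj_eval, Complex.conj_conj]
    have hxQ : (starRingEnd ℂ) (φ (N + 1) ((starRingEnd ℂ) ω)) = Qc.eval ω := by
      rw [hQ ((starRingEnd ℂ) ω), conj_eval, Complex.conj_conj]
    have hxj : ∀ j ∈ Finset.range (N + 1),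
        deriv (φ j) z * (starRingEnd ℂ) (φ j ((starRingEnd ℂ) ω)) =
          deriv (φ j) z * ((p j).map (starRingEnd ℂ)).eval ω := by
      intro j hj
      have hj' : j ≤ N + 1 := le_of_lt (Finset.mem_range.mp hj)
      rw [hp j hj']
      simp only [conj_eval, Complex.conj_conj]
    rw [Finset.sum_congr rfl hxj, hxs, hxQ, Complex.conj_conj] at h
    exact h
  have hB2c : (B2 φ N z : ℂ) =
      (((Psc.derivative.eval w0 * deriv φs z - Qc.derivative.eval w0 * deriv (φ (N + 1)) z) *
            (1 - w0 * z) +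
          (Psc.eval w0 * deriv φs z - Qc.eval w0 * deriv (φ (N + 1)) z) * (-z) -
          ((Psc.derivative.eval w0 * φs z - Qc.derivative.eval w0 * φ (N + 1) z) * (-w0) +
            (Psc.eval w0 * φs z - Qc.eval w0 * φ (N + 1) z) * (-1))) *
          (1 - w0 * z) ^ 2 -
        ((Psc.eval w0 * deriv φs z - Qc.eval w0 * deriv (φ (N + 1)) z) * (1 - w0 * z) -
          (Psc.eval w0 * φs z - Qc.eval w0 * φ (N + 1) z) * (-w0)) *
          ((2 : ℕ) * (1 - w0 * z) ^ (2 - 1) * (-z))) /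
        ((1 - w0 * z) ^ 2) ^ 2 := by
    rw [← hHval, ← hH.deriv, heq2.deriv_eq, hR2.deriv]
  -- real closed forms
  set E : ℝ := Complex.normSq (deriv φs z) - Complex.normSq (deriv (φ (N + 1)) z) with hE
  have hnz : Complex.normSq z = 1 - d := by rw [hd, ← Complex.sq_norm]; ring
  have hcz : (1 : ℂ) - (starRingEnd ℂ) z * z ≠ 0 := sub_ne_zero.mpr (Ne.symm hzz)
  have hrec : (((z * c1).re : ℝ) : ℂ) = (z * c1 + (starRingEnd ℂ) (z * c1)) / 2 := by
    rw [Complex.add_conj]; push_cast; ring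
  have hB2r : B2 φ N z =
      (E * d ^ 2 + 2 * (z * c1).re * d + A * d + 2 * (1 - d) * A) / d ^ 3 := by
    refine Complex.ofReal_inj.mp ?_
    rw [hB2c, hevs, hevQ, hevds, hevdQ, hw0]
    push_cast
    rw [hE]
    push_cast
    rw [hrec, ← hAc, ← hdc]
    simp only [Complex.normSq_eq_conj_mul_self, hc1, map_sub, map_mul, Complex.conj_conj]
    rw [hw0]
    field_simp
    ring
  have key : A * E = Complex.normSq c1 - Complex.normSq c3 := by
    refine Complex.ofReal_inj.mp ?_
    push_cast
    rw [hE, ← hAc]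
    push_cast
    simp only [Complex.normSq_eq_conj_mul_self, hc1, hc3, map_sub, map_mul, Complex.conj_conj]
    ring
  have hB1sqr : ‖B1 φ N z‖ ^ 2 =
      (Complex.normSq c1 * d ^ 2 + 2 * A * d * (z * c1).re + (1 - d) * A ^ 2) / d ^ 4 := by
    rw [Complex.sq_norm, hB1c, Complex.normSq_div]
    have hden : Complex.normSq ((d : ℂ) ^ 2) = d ^ 4 := by
      rw [map_pow, Complex.normSq_ofReal]; ring
    rw [hden]
    have hnum : Complex.normSq (c1 * (d : ℂ) + (starRingEnd ℂ) z * (A : ℂ)) =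
        Complex.normSq c1 * d ^ 2 + 2 * A * d * (z * c1).re + Complex.normSq z * A ^ 2 := by
      simp only [Complex.normSq_apply, Complex.add_re, Complex.add_im, Complex.mul_re,
        Complex.mul_im, Complex.conj_re, Complex.conj_im, Complex.ofReal_re, Complex.ofReal_im]
      ring
    rw [hnum, hnz]
  have hA0 : A ≠ 0 := by
    intro h; rw [hB0r, h, zero_div] at hB0; exact lt_irrefl 0 hB0
  have hEe : E = (Complex.normSq c1 - Complex.normSq c3) / A := by
    rw [eq_div_iff hA0]; linear_combination key
  rw [hEe] at hB2r
  -- final assembly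
  have hcc1 : (starRingEnd ℂ) (deriv φs z) * φs z -
      (starRingEnd ℂ) (deriv (φ (N + 1)) z) * φ (N + 1) z = (starRingEnd ℂ) c1 := by
    rw [hc1]; simp only [map_sub, map_mul, Complex.conj_conj]; ring
  have hrc1 : deriv φs z * (starRingEnd ℂ) (φs z) -
      deriv (φ (N + 1)) z * (starRingEnd ℂ) (φ (N + 1) z) = c1 := by
    rw [hc1]; ring
  have hexp : -(K₁ ^ 2 + K₂ ^ 2) / (2 * (A / d)) = -((K₁ ^ 2 + K₂ ^ 2) / 2) * d / A := by
    field_simp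
  simp only [hDen]
  rw [hB0r, hB2r, hB1sqr, hexp, hcc1, hrc1]
  simp only [Complex.sq_norm, Complex.normSq_conj, hnz]
  field_simp
  ring
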